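/- Let (X,d) be a compact metric space and 𝕀 = {S_1,...,S_N} an IFS of bi-Lipschitz contractions on X. Then for every t ≥ 0 the limit P(t) = lim_{k→∞} (1/k) log ∑_{𝐢∈I^k} Lip⁺(S_𝐢)^t exists; moreover, the sequence (s_k), where s_k is the unique solution of ∑_{𝐢∈I^k} Lip⁺(S_𝐢)^{s_k} = 1, converges to the unique zero of P. -/

import Mathlib

open Metric Filter Set MeasureTheory Topology

/-- The upper Lipschitz constant `Lip⁺(S) = sup_{x ≠ y} d(S x, S y)/d(x,y)`. -/
noncomputable def LipPlus {X : Type*} [MetricSpace X] (S : X → X) : ℝ :=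
  sSup {r : ℝ | ∃ x y : X, x ≠ y ∧ r = dist (S x) (S y) / dist x y}

/-- The lower Lipschitz constant `Lip⁻(S) = inf_{x ≠ y} d(S x, S y)/d(x,y)`. -/
noncomputable def LipMinus {X : Type*} [MetricSpace X] (S : X → X) : ℝ :=
  sInf {r : ℝ | ∃ x y : X, x ≠ y ∧ r = dist (S x) (S y) / dist x y}

/-- `S` is a bi-Lipschitz contraction: `0 < Lip⁻(S) ≤ Lip⁺(S) < 1`,
with `Lip⁺(S)` and `Lip⁻(S)` genuine upper/lower Lipschitz bounds. -/
def IsBiLipContraction {X : Type*} [MetricSpace X] (S : X → X) : Prop :=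
  (∀ x y : X, dist (S x) (S y) ≤ LipPlus S * dist x y) ∧
  (∀ x y : X, LipMinus S * dist x y ≤ dist (S x) (S y)) ∧
  0 < LipMinus S ∧ LipMinus S ≤ LipPlus S ∧ LipPlus S < 1

/-- `S_𝐢 = S_{i₁} ∘ ⋯ ∘ S_{i_k}` for a finite word `𝐢` over `{1,…,N}`. -/
def compList {X : Type*} {N : ℕ} (S : Fin N → X → X) : List (Fin N) → X → X
  | [] => id
  | i :: w => S i ∘ compList S w

namespace ULDaux

variable {X : Type*} [MetricSpace X] {N : ℕ}

lemma bddAbove_ratio {f : X → X} {C : ℝ} (hC : ∀ x y, dist (f x) (f y) ≤ C * dist x y) :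
    BddAbove {r : ℝ | ∃ x y : X, x ≠ y ∧ r = dist (f x) (f y) / dist x y} := by
  refine ⟨C, ?_⟩
  rintro r ⟨x, y, hxy, rfl⟩
  rw [div_le_iff₀ (dist_pos.2 hxy)]
  exact hC x y

lemma lipPlus_le (hX : ∃ x y : X, x ≠ y) {f : X → X} {C : ℝ}
    (hC : ∀ x y, dist (f x) (f y) ≤ C * dist x y) : LipPlus f ≤ C := by
  obtain ⟨x, y, hxy⟩ := hX
  refine csSup_le ⟨_, x, y, hxy, rfl⟩ ?_
  rintro r ⟨x, y, hxy, rfl⟩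
  rw [div_le_iff₀ (dist_pos.2 hxy)]
  exact hC x y

lemma dist_le_lipPlus {f : X → X} {C : ℝ}
    (hC : ∀ x y, dist (f x) (f y) ≤ C * dist x y) (x y : X) :
    dist (f x) (f y) ≤ LipPlus f * dist x y := by
  rcases eq_or_ne x y with rfl | hxy
  · simp
  · have hmem : dist (f x) (f y) / dist x y ∈
        {r : ℝ | ∃ x y : X, x ≠ y ∧ r = dist (f x) (f y) / dist x y} := ⟨x, y, hxy, rfl⟩
    have h := le_csSup (bddAbove_ratio hC) hmem
    exact (div_le_iff₀ (dist_pos.2 hxy)).1 h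

lemma le_lipPlus (hX : ∃ x y : X, x ≠ y) {f : X → X} {C c : ℝ}
    (hC : ∀ x y, dist (f x) (f y) ≤ C * dist x y)
    (hc : ∀ x y, c * dist x y ≤ dist (f x) (f y)) : c ≤ LipPlus f := by
  obtain ⟨x, y, hxy⟩ := hX
  have h1 : c ≤ dist (f x) (f y) / dist x y := (le_div_iff₀ (dist_pos.2 hxy)).2 (hc x y)
  exact h1.trans (le_csSup (bddAbove_ratio hC) ⟨x, y, hxy, rfl⟩)

variable {S : Fin N → X → X}

lemma lipPlus_nonneg (hS : ∀ i, IsBiLipContraction (S i)) (i : Fin N) : 0 ≤ LipPlus (S i) :=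
  ((hS i).2.2.1.trans_le (hS i).2.2.2.1).le

lemma compList_append (w v : List (Fin N)) :
    compList S (w ++ v) = compList S w ∘ compList S v := by
  induction w with
  | nil => rfl
  | cons i w ih => simp [compList, ih, Function.comp_assoc]

lemma dist_compList_le (hS : ∀ i, IsBiLipContraction (S i)) (w : List (Fin N)) (x y : X) :
    dist (compList S w x) (compList S w y) ≤ (w.map fun i => LipPlus (S i)).prod * dist x y := by
  induction w with
  | nil => simp [compList]
  | cons i w ih =>
    simp only [compList, Function.comp_apply, List.map_cons, List.prod_cons]
    calc dist (S i (compList S w x)) (S i (compList S w y))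
        ≤ LipPlus (S i) * dist (compList S w x) (compList S w y) := (hS i).1 _ _
      _ ≤ LipPlus (S i) * ((w.map fun i => LipPlus (S i)).prod * dist x y) :=
          mul_le_mul_of_nonneg_left ih (lipPlus_nonneg hS i)
      _ = LipPlus (S i) * (w.map fun i => LipPlus (S i)).prod * dist x y := by ring

lemma dist_compList_ge (hS : ∀ i, IsBiLipContraction (S i)) (w : List (Fin N)) (x y : X) :
    (w.map fun i => LipMinus (S i)).prod * dist x y ≤ dist (compList S w x) (compList S w y) := by
  induction w with
  | nil => simp [compList]
  | cons i w ih =>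
    simp only [compList, Function.comp_apply, List.map_cons, List.prod_cons]
    calc LipMinus (S i) * (w.map fun i => LipMinus (S i)).prod * dist x y
        = LipMinus (S i) * ((w.map fun i => LipMinus (S i)).prod * dist x y) := by ring
      _ ≤ LipMinus (S i) * dist (compList S w x) (compList S w y) :=
          mul_le_mul_of_nonneg_left ih (hS i).2.2.1.le
      _ ≤ dist (S i (compList S w x)) (S i (compList S w y)) := (hS i).2.1 _ _


section Words

variable (hS : ∀ i, IsBiLipContraction (S i)) (hX : ∃ x y : X, x ≠ y)
  {a b : ℝ} (ha : ∀ i, LipPlus (S i) ≤ a) (hb : ∀ i, b ≤ LipMinus (S i))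
  (hb0 : 0 < b) (ha1 : a < 1) (hba : b ≤ a)

include hS hX ha hb hb0 ha1 hba

lemma prodPlus_nonneg (w : List (Fin N)) : 0 ≤ (w.map fun i => LipPlus (S i)).prod := by
  induction w with
  | nil => simp
  | cons i w ih => simpa using mul_nonneg (lipPlus_nonneg hS i) ih

lemma prodMinus_pos (w : List (Fin N)) : 0 < (w.map fun i => LipMinus (S i)).prod := by
  induction w with
  | nil => simp
  | cons i w ih => simpa using mul_pos (hS i).2.2.1 ih

lemma prodPlus_le_pow (w : List (Fin N)) :
    (w.map fun i => LipPlus (S i)).prod ≤ a ^ w.length := by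
  induction w with
  | nil => simp
  | cons i w ih =>
    simp only [List.map_cons, List.prod_cons, List.length_cons, pow_succ]
    rw [mul_comm (a ^ w.length) a]
    exact mul_le_mul (ha i) ih (prodPlus_nonneg hS hX ha hb hb0 ha1 hba w) (hb0.trans_le hba).le

lemma pow_le_prodMinus (w : List (Fin N)) :
    b ^ w.length ≤ (w.map fun i => LipMinus (S i)).prod := by
  induction w with
  | nil => simp
  | cons i w ih =>
    simp only [List.map_cons, List.prod_cons, List.length_cons, pow_succ]
    rw [mul_comm (b ^ w.length) b]
    exact mul_le_mul (hb i) ih (pow_nonneg hb0.le _) (hS i).2.2.1.le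

lemma L_pos (w : List (Fin N)) : 0 < LipPlus (compList S w) :=
  (prodMinus_pos hS hX ha hb hb0 ha1 hba w).trans_le
    (le_lipPlus hX (dist_compList_le hS w) (dist_compList_ge hS w))

lemma pow_le_L (w : List (Fin N)) : b ^ w.length ≤ LipPlus (compList S w) :=
  (pow_le_prodMinus hS hX ha hb hb0 ha1 hba w).trans
    (le_lipPlus hX (dist_compList_le hS w) (dist_compList_ge hS w))

lemma L_le_pow (w : List (Fin N)) : LipPlus (compList S w) ≤ a ^ w.length :=
  (lipPlus_le hX (dist_compList_le hS w)).trans (prodPlus_le_pow hS hX ha hb hb0 ha1 hba w)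

lemma L_le_one (w : List (Fin N)) : LipPlus (compList S w) ≤ 1 :=
  (L_le_pow hS hX ha hb hb0 ha1 hba w).trans (pow_le_one₀ (hb0.trans_le hba).le ha1.le)

lemma dist_L (w : List (Fin N)) (x y : X) :
    dist (compList S w x) (compList S w y) ≤ LipPlus (compList S w) * dist x y :=
  dist_le_lipPlus (dist_compList_le hS w) x y

lemma L_submult (w v : List (Fin N)) :
    LipPlus (compList S (w ++ v)) ≤ LipPlus (compList S w) * LipPlus (compList S v) := by
  apply lipPlus_le hX
  intro x y
  rw [compList_append]
  calc dist ((compList S w ∘ compList S v) x) ((compList S w ∘ compList S v) y)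
      ≤ LipPlus (compList S w) * dist (compList S v x) (compList S v y) := dist_L hS hX ha hb hb0 ha1 hba _ _ _
    _ ≤ LipPlus (compList S w) * (LipPlus (compList S v) * dist x y) :=
        mul_le_mul_of_nonneg_left (dist_L hS hX ha hb hb0 ha1 hba _ _ _) (L_pos hS hX ha hb hb0 ha1 hba w).le
    _ = LipPlus (compList S w) * LipPlus (compList S v) * dist x y := by ring

noncomputable def sig (S : Fin N → X → X) (k : ℕ) (t : ℝ) : ℝ :=
  ∑ w : Fin k → Fin N, LipPlus (compList S (List.ofFn w)) ^ t

variable [Nonempty (Fin N)]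

lemma sig_pos (k : ℕ) (t : ℝ) : 0 < sig S k t :=
  Finset.sum_pos
    (fun w _ => Real.rpow_pos_of_pos (L_pos hS hX ha hb hb0 ha1 hba _) t)
    Finset.univ_nonempty

lemma L_ofFn_pos (k : ℕ) (w : Fin k → Fin N) : 0 < LipPlus (compList S (List.ofFn w)) :=
  L_pos hS hX ha hb hb0 ha1 hba _

lemma L_ofFn_le (k : ℕ) (w : Fin k → Fin N) : LipPlus (compList S (List.ofFn w)) ≤ a ^ k := by
  have := L_le_pow hS hX ha hb hb0 ha1 hba (List.ofFn w)
  simpa using this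

lemma le_L_ofFn (k : ℕ) (w : Fin k → Fin N) : b ^ k ≤ LipPlus (compList S (List.ofFn w)) := by
  have := pow_le_L hS hX ha hb hb0 ha1 hba (List.ofFn w)
  simpa using this

lemma sig_submul {t : ℝ} (ht : 0 ≤ t) (m n : ℕ) :
    sig S (m + n) t ≤ sig S m t * sig S n t := by
  have key : ∀ p : (Fin m → Fin N) × (Fin n → Fin N),
      LipPlus (compList S (List.ofFn (Fin.appendEquiv m n p))) ^ t ≤
        LipPlus (compList S (List.ofFn p.1)) ^ t * LipPlus (compList S (List.ofFn p.2)) ^ t := by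
    intro p
    have h1 : List.ofFn (Fin.appendEquiv m n p) = List.ofFn p.1 ++ List.ofFn p.2 := by
      simp [Fin.appendEquiv]
    rw [h1, ← Real.mul_rpow (L_ofFn_pos hS hX ha hb hb0 ha1 hba m p.1).le
      (L_ofFn_pos hS hX ha hb hb0 ha1 hba n p.2).le]
    exact Real.rpow_le_rpow (L_pos hS hX ha hb hb0 ha1 hba _).le
      (L_submult hS hX ha hb hb0 ha1 hba _ _) ht
  calc sig S (m + n) t
      = ∑ p : (Fin m → Fin N) × (Fin n → Fin N),
          LipPlus (compList S (List.ofFn (Fin.appendEquiv m n p))) ^ t :=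
        (Equiv.sum_comp (Fin.appendEquiv m n)
          (fun w => LipPlus (compList S (List.ofFn w)) ^ t)).symm
    _ ≤ ∑ p : (Fin m → Fin N) × (Fin n → Fin N),
          LipPlus (compList S (List.ofFn p.1)) ^ t * LipPlus (compList S (List.ofFn p.2)) ^ t :=
        Finset.sum_le_sum fun p _ => key p
    _ = sig S m t * sig S n t := by
        rw [Fintype.sum_prod_type]
        simp_rw [← Finset.mul_sum]
        rw [← Finset.sum_mul]
        rfl

lemma sig_anti {t u : ℝ} (h : t ≤ u) (k : ℕ) : sig S k u ≤ sig S k t :=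
  Finset.sum_le_sum fun w _ =>
    Real.rpow_le_rpow_of_exponent_ge (L_ofFn_pos hS hX ha hb hb0 ha1 hba k w)
      (L_le_one hS hX ha hb hb0 ha1 hba _) h

lemma sig_shift_le {t u : ℝ} (h : t ≤ u) (k : ℕ) :
    sig S k u ≤ sig S k t * a ^ ((k : ℝ) * (u - t)) := by
  have ha0 : 0 < a := hb0.trans_le hba
  rw [sig, sig, Finset.sum_mul]
  refine Finset.sum_le_sum fun w _ => ?_
  have hL := L_ofFn_pos hS hX ha hb hb0 ha1 hba k w
  have hLa := L_ofFn_le hS hX ha hb hb0 ha1 hba k w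
  have h1 : LipPlus (compList S (List.ofFn w)) ^ u =
      LipPlus (compList S (List.ofFn w)) ^ t * LipPlus (compList S (List.ofFn w)) ^ (u - t) := by
    rw [← Real.rpow_add hL, add_sub_cancel]
  rw [h1]
  have h2 : LipPlus (compList S (List.ofFn w)) ^ (u - t) ≤ a ^ ((k : ℝ) * (u - t)) := by
    rw [Real.rpow_mul ha0.le, Real.rpow_natCast]
    exact Real.rpow_le_rpow hL.le hLa (sub_nonneg.2 h)
  exact mul_le_mul_of_nonneg_left h2 (Real.rpow_pos_of_pos hL t).le

lemma sig_shift_ge {t u : ℝ} (h : t ≤ u) (k : ℕ) :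
    sig S k t * b ^ ((k : ℝ) * (u - t)) ≤ sig S k u := by
  rw [sig, sig, Finset.sum_mul]
  refine Finset.sum_le_sum fun w _ => ?_
  have hL := L_ofFn_pos hS hX ha hb hb0 ha1 hba k w
  have hLb := le_L_ofFn hS hX ha hb hb0 ha1 hba k w
  have h1 : LipPlus (compList S (List.ofFn w)) ^ u =
      LipPlus (compList S (List.ofFn w)) ^ t * LipPlus (compList S (List.ofFn w)) ^ (u - t) := by
    rw [← Real.rpow_add hL, add_sub_cancel]
  rw [h1]
  have h2 : b ^ ((k : ℝ) * (u - t)) ≤ LipPlus (compList S (List.ofFn w)) ^ (u - t) := by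
    rw [Real.rpow_mul hb0.le, Real.rpow_natCast]
    exact Real.rpow_le_rpow (pow_nonneg hb0.le k) hLb (sub_nonneg.2 h)
  exact mul_le_mul_of_nonneg_left h2 (Real.rpow_pos_of_pos hL t).le

lemma sig_ge_single {t : ℝ} (ht : 0 ≤ t) (k : ℕ) :
    ((b ^ k : ℝ)) ^ t ≤ sig S k t := by
  have w0 : Fin k → Fin N := fun _ => Classical.arbitrary _
  calc ((b ^ k : ℝ)) ^ t ≤ LipPlus (compList S (List.ofFn w0)) ^ t :=
      Real.rpow_le_rpow (pow_nonneg hb0.le k) (le_L_ofFn hS hX ha hb hb0 ha1 hba k w0) ht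
    _ ≤ sig S k t :=
      Finset.single_le_sum
        (fun w _ => (Real.rpow_pos_of_pos (L_ofFn_pos hS hX ha hb hb0 ha1 hba k w) t).le)
        (Finset.mem_univ w0)

lemma one_le_sig_zero (k : ℕ) : 1 ≤ sig S k 0 := by
  have h : sig S k 0 = (Fintype.card (Fin k → Fin N) : ℝ) := by
    simp [sig, Real.rpow_zero]
  rw [h]
  exact_mod_cast Fintype.card_pos

noncomputable def press (S : Fin N → X → X) (t : ℝ) : ℝ :=
  sInf ((fun k : ℕ => Real.log (sig S k t) / k) '' Set.Ici 1)

lemma subadd {t : ℝ} (ht : 0 ≤ t) : Subadditive (fun k => Real.log (sig S k t)) := by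
  intro m n
  have h1 := sig_submul hS hX ha hb hb0 ha1 hba ht m n
  calc Real.log (sig S (m + n) t) ≤ Real.log (sig S m t * sig S n t) :=
      (Real.log_le_log_iff (sig_pos hS hX ha hb hb0 ha1 hba _ _)
        (mul_pos (sig_pos hS hX ha hb hb0 ha1 hba _ _) (sig_pos hS hX ha hb hb0 ha1 hba _ _))).2 h1
    _ = _ := Real.log_mul (sig_pos hS hX ha hb hb0 ha1 hba _ _).ne'
        (sig_pos hS hX ha hb hb0 ha1 hba _ _).ne'

lemma press_bdd {t : ℝ} (ht : 0 ≤ t) :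
    BddBelow (Set.range fun k : ℕ => Real.log (sig S k t) / k) := by
  refine ⟨min 0 (t * Real.log b), ?_⟩
  rintro x ⟨k, rfl⟩
  rcases Nat.eq_zero_or_pos k with rfl | hk
  · simp
  · have hk0 : (0 : ℝ) < k := Nat.cast_pos.2 hk
    have h1 := sig_ge_single hS hX ha hb hb0 ha1 hba ht k
    have h2 : t * ((k : ℝ) * Real.log b) ≤ Real.log (sig S k t) := by
      calc t * ((k : ℝ) * Real.log b) = Real.log (((b ^ k : ℝ)) ^ t) := by
            rw [Real.log_rpow (pow_pos hb0 k), Real.log_pow]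
        _ ≤ Real.log (sig S k t) :=
            (Real.log_le_log_iff (Real.rpow_pos_of_pos (pow_pos hb0 k) t)
              (sig_pos hS hX ha hb hb0 ha1 hba _ _)).2 h1
    have h3 : t * Real.log b ≤ Real.log (sig S k t) / k := by
      rw [le_div_iff₀ hk0]
      calc t * Real.log b * k = t * ((k : ℝ) * Real.log b) := by ring
        _ ≤ _ := h2
    exact le_trans (min_le_right _ _) h3

lemma press_tendsto {t : ℝ} (ht : 0 ≤ t) :
    Tendsto (fun k : ℕ => Real.log (sig S k t) / k) atTop (𝓝 (press S t)) := by
  have h := (subadd hS hX ha hb hb0 ha1 hba ht).tendsto_lim (press_bdd hS hX ha hb hb0 ha1 hba ht)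
  simpa [Subadditive.lim, press] using h

lemma press_le {t : ℝ} (ht : 0 ≤ t) {k : ℕ} (hk : 1 ≤ k) :
    press S t ≤ Real.log (sig S k t) / k :=
  csInf_le ((press_bdd hS hX ha hb hb0 ha1 hba ht).mono (image_subset_range _ _)) ⟨k, hk, rfl⟩

lemma le_press {c t : ℝ} (h : ∀ k : ℕ, 1 ≤ k → c ≤ Real.log (sig S k t) / k) :
    c ≤ press S t := by
  refine le_csInf ⟨_, Set.mem_image_of_mem _ (Set.mem_Ici.2 (le_refl 1))⟩ ?_
  rintro x ⟨k, hk, rfl⟩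
  exact h k hk

lemma log_sig_shift_le {t u : ℝ} (htu : t ≤ u) {k : ℕ} (hk : 1 ≤ k) :
    Real.log (sig S k u) / k ≤ Real.log (sig S k t) / k + (u - t) * Real.log a := by
  have ha0 : 0 < a := hb0.trans_le hba
  have hk0 : (0 : ℝ) < k := Nat.cast_pos.2 hk
  have h1 : Real.log (sig S k u) ≤
      Real.log (sig S k t) + (k : ℝ) * ((u - t) * Real.log a) := by
    calc Real.log (sig S k u) ≤ Real.log (sig S k t * a ^ ((k : ℝ) * (u - t))) :=
        (Real.log_le_log_iff (sig_pos hS hX ha hb hb0 ha1 hba _ _)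
          (mul_pos (sig_pos hS hX ha hb hb0 ha1 hba _ _)
            (Real.rpow_pos_of_pos ha0 _))).2 (sig_shift_le hS hX ha hb hb0 ha1 hba htu k)
      _ = Real.log (sig S k t) + (k : ℝ) * ((u - t) * Real.log a) := by
          rw [Real.log_mul (sig_pos hS hX ha hb hb0 ha1 hba _ _).ne'
            (Real.rpow_pos_of_pos ha0 _).ne', Real.log_rpow ha0]
          ring
  calc Real.log (sig S k u) / k ≤
      (Real.log (sig S k t) + (k : ℝ) * ((u - t) * Real.log a)) / k :=
        (div_le_div_iff_of_pos_right hk0).2 h1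
    _ = Real.log (sig S k t) / k + (u - t) * Real.log a := by
        rw [add_div, mul_div_cancel_left₀ _ hk0.ne']

lemma log_sig_shift_ge {t u : ℝ} (htu : t ≤ u) {k : ℕ} (hk : 1 ≤ k) :
    Real.log (sig S k t) / k + (u - t) * Real.log b ≤ Real.log (sig S k u) / k := by
  have hk0 : (0 : ℝ) < k := Nat.cast_pos.2 hk
  have h1 : Real.log (sig S k t) + (k : ℝ) * ((u - t) * Real.log b) ≤
      Real.log (sig S k u) := by
    calc Real.log (sig S k t) + (k : ℝ) * ((u - t) * Real.log b)
        = Real.log (sig S k t * b ^ ((k : ℝ) * (u - t))) := by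
          rw [Real.log_mul (sig_pos hS hX ha hb hb0 ha1 hba _ _).ne'
            (Real.rpow_pos_of_pos hb0 _).ne', Real.log_rpow hb0]
          ring
      _ ≤ Real.log (sig S k u) :=
        (Real.log_le_log_iff (mul_pos (sig_pos hS hX ha hb hb0 ha1 hba _ _)
            (Real.rpow_pos_of_pos hb0 _)) (sig_pos hS hX ha hb hb0 ha1 hba _ _)).2
          (sig_shift_ge hS hX ha hb hb0 ha1 hba htu k)
  calc Real.log (sig S k t) / k + (u - t) * Real.log b
      = (Real.log (sig S k t) + (k : ℝ) * ((u - t) * Real.log b)) / k := by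
        rw [add_div, mul_div_cancel_left₀ _ hk0.ne']
    _ ≤ Real.log (sig S k u) / k := (div_le_div_iff_of_pos_right hk0).2 h1

lemma press_shift_le {t u : ℝ} (ht : 0 ≤ t) (htu : t ≤ u) :
    press S u ≤ press S t + (u - t) * Real.log a := by
  have h1 : press S u - (u - t) * Real.log a ≤ press S t := by
    apply le_press hS hX ha hb hb0 ha1 hba
    intro k hk
    have h2 := press_le hS hX ha hb hb0 ha1 hba (ht.trans htu) hk
    have h3 := log_sig_shift_le hS hX ha hb hb0 ha1 hba htu hk
    linarith
  linarith

lemma press_shift_ge {t u : ℝ} (ht : 0 ≤ t) (htu : t ≤ u) :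
    press S t + (u - t) * Real.log b ≤ press S u := by
  apply le_press hS hX ha hb hb0 ha1 hba
  intro k hk
  have h2 := press_le hS hX ha hb hb0 ha1 hba ht hk
  have h3 := log_sig_shift_ge hS hX ha hb hb0 ha1 hba htu hk
  linarith

lemma press_zero_nonneg : 0 ≤ press S 0 := by
  apply le_press hS hX ha hb hb0 ha1 hba
  intro k hk
  exact div_nonneg (Real.log_nonneg (one_le_sig_zero hS hX ha hb hb0 ha1 hba k))
    (Nat.cast_nonneg k)

lemma press_continuousOn : ContinuousOn (press S) (Set.Ici 0) := by
  have hb1 : b < 1 := lt_of_le_of_lt hba ha1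
  have hlogb : Real.log b ≤ 0 := Real.log_nonpos hb0.le hb1.le
  have hloga : Real.log a ≤ 0 := Real.log_nonpos (hb0.trans_le hba).le ha1.le
  have hab : Real.log b ≤ Real.log a :=
    (Real.log_le_log_iff hb0 (hb0.trans_le hba)).2 hba
  have key : ∀ t ∈ Set.Ici (0:ℝ), ∀ u ∈ Set.Ici (0:ℝ), t ≤ u →
      |press S u - press S t| ≤ -Real.log b * (u - t) := by
    intro t ht u hu htu
    have h1 := press_shift_le hS hX ha hb hb0 ha1 hba ht htu
    have h2 := press_shift_ge hS hX ha hb hb0 ha1 hba ht htu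
    rw [abs_le]
    constructor
    · nlinarith
    · nlinarith [mul_nonpos_of_nonneg_of_nonpos (sub_nonneg.2 htu) hloga,
        mul_nonneg (sub_nonneg.2 htu) (neg_nonneg.2 hlogb)]
  have hlip : LipschitzOnWith (Real.toNNReal (-Real.log b)) (press S) (Set.Ici 0) := by
    apply LipschitzOnWith.of_dist_le_mul
    intro t ht u hu
    rw [Real.dist_eq, Real.dist_eq, Real.coe_toNNReal _ (neg_nonneg.2 hlogb)]
    rcases le_total t u with h | h
    · rw [abs_sub_comm (press S t) (press S u), abs_sub_comm t u,
        abs_of_nonneg (sub_nonneg.2 h)]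
      exact key t ht u hu h
    · rw [abs_of_nonneg (sub_nonneg.2 h)]
      exact key u hu t ht h
  exact hlip.continuousOn

lemma sig_one_le {t : ℝ} (ht : 0 ≤ t) : sig S 1 t ≤ (N : ℝ) * a ^ t := by
  have ha0 : 0 < a := hb0.trans_le hba
  have hterm : ∀ w : Fin 1 → Fin N, LipPlus (compList S (List.ofFn w)) ^ t ≤ a ^ t := by
    intro w
    have h := L_ofFn_le hS hX ha hb hb0 ha1 hba 1 w
    rw [pow_one] at h
    exact Real.rpow_le_rpow (L_ofFn_pos hS hX ha hb hb0 ha1 hba 1 w).le h ht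
  have hcard : (Fintype.card (Fin 1 → Fin N) : ℝ) = (N : ℝ) := by simp
  calc sig S 1 t ≤ ∑ _w : Fin 1 → Fin N, a ^ t := Finset.sum_le_sum fun w _ => hterm w
    _ = (Fintype.card (Fin 1 → Fin N) : ℝ) * a ^ t := by
        rw [Finset.sum_const, Finset.card_univ, nsmul_eq_mul]
    _ = (N : ℝ) * a ^ t := by rw [hcard]

end Words

end ULDaux

/-- The pressure `P(t) = lim_k (1/k) log ∑_{𝐢 ∈ I^k} Lip⁺(S_𝐢)^t` exists for every `t ≥ 0`,
and the sequence `(s_k)` of solutions of `∑_{𝐢∈I^k} Lip⁺(S_𝐢)^{s_k} = 1` converges to the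
unique zero of `P`, i.e. the upper Lipschitz dimension exists. -/
theorem upper_lipschitz_dimension_exists
    {X : Type*} [MetricSpace X] [CompactSpace X]
    {N : ℕ} (S : Fin N → X → X) (hS : ∀ i, IsBiLipContraction (S i)) :
    ∃ P : ℝ → ℝ,
      (∀ t : ℝ, 0 ≤ t → Filter.Tendsto
        (fun k : ℕ => Real.log (∑ w : Fin k → Fin N, LipPlus (compList S (List.ofFn w)) ^ t) / k)
        Filter.atTop (𝓝 (P t))) ∧
      ∀ sk : ℕ → ℝ,
        (∀ k, 1 ≤ k → ∑ w : Fin k → Fin N, LipPlus (compList S (List.ofFn w)) ^ sk k = 1) →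
        ∃ s0 : ℝ, 0 ≤ s0 ∧ P s0 = 0 ∧ (∀ t : ℝ, 0 ≤ t → P t = 0 → t = s0) ∧
          Filter.Tendsto sk Filter.atTop (𝓝 s0) := by
  classical
  rcases Nat.eq_zero_or_pos N with hN | hN
  · subst hN
    refine ⟨fun _ => 0, ?_, ?_⟩
    · intro t ht
      have hev : (fun k : ℕ =>
          Real.log (∑ w : Fin k → Fin 0, LipPlus (compList S (List.ofFn w)) ^ t) / k)
          =ᶠ[atTop] (fun _ => (0 : ℝ)) := by
        filter_upwards [eventually_ge_atTop 1] with k hk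
        haveI : IsEmpty (Fin k → Fin 0) := ⟨fun w => (w ⟨0, hk⟩).elim0⟩
        rw [Finset.univ_eq_empty, Finset.sum_empty, Real.log_zero, zero_div]
      exact (tendsto_congr' hev).2 tendsto_const_nhds
    · intro sk hsk
      exfalso
      have h := hsk 1 le_rfl
      haveI : IsEmpty (Fin 1 → Fin 0) := ⟨fun w => (w 0).elim0⟩
      rw [Finset.univ_eq_empty, Finset.sum_empty] at h
      exact zero_ne_one h
  · haveI : Nonempty (Fin N) := ⟨⟨0, hN⟩⟩
    have hX : ∃ x y : X, x ≠ y := by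
      by_contra h
      push_neg at h
      have h0 := (hS ⟨0, hN⟩).2.2.1
      have hempty : {r : ℝ | ∃ x y : X, x ≠ y ∧
          r = dist (S ⟨0, hN⟩ x) (S ⟨0, hN⟩ y) / dist x y} = ∅ := by
        ext r
        simp only [Set.mem_setOf_eq, Set.mem_empty_iff_false, iff_false, not_exists]
        intro x y hxy
        exact absurd (h x y) hxy.1
      rw [LipMinus, hempty, Real.sInf_empty] at h0
      exact lt_irrefl 0 h0
    set a := Finset.univ.sup' Finset.univ_nonempty (fun i => LipPlus (S i)) with hadef
    set b := Finset.univ.inf' Finset.univ_nonempty (fun i => LipMinus (S i)) with hbdef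
    have ha : ∀ i, LipPlus (S i) ≤ a := by
      intro i
      rw [hadef]
      exact Finset.le_sup' (fun j => LipPlus (S j)) (Finset.mem_univ i)
    have hb : ∀ i, b ≤ LipMinus (S i) := by
      intro i
      rw [hbdef]
      exact Finset.inf'_le (fun j => LipMinus (S j)) (Finset.mem_univ i)
    have ha1 : a < 1 := by
      rw [hadef]
      exact (Finset.sup'_lt_iff Finset.univ_nonempty).2 fun i _ => (hS i).2.2.2.2
    have hb0 : 0 < b := by
      rw [hbdef]
      exact (Finset.lt_inf'_iff Finset.univ_nonempty).2 fun i _ => (hS i).2.2.1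
    have hba : b ≤ a :=
      (hb ⟨0, hN⟩).trans (((hS ⟨0, hN⟩).2.2.2.1).trans (ha ⟨0, hN⟩))
    have ha0 : 0 < a := hb0.trans_le hba
    have hloga : Real.log a < 0 := Real.log_neg ha0 ha1
    have hlogb : Real.log b < 0 := Real.log_neg hb0 (hba.trans_lt ha1)
    refine ⟨ULDaux.press S, ?_, ?_⟩
    · intro t ht
      exact ULDaux.press_tendsto hS hX ha hb hb0 ha1 hba ht
    · intro sk hsk
      set T : ℝ := (Real.log N + 1) / (-Real.log a) with hT
      have hlogN : 0 ≤ Real.log N := Real.log_nonneg (by exact_mod_cast hN)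
      have hT0 : 0 ≤ T := div_nonneg (by linarith) (by linarith)
      have hPT : ULDaux.press S T ≤ -1 := by
        have h1 := ULDaux.press_le hS hX ha hb hb0 ha1 hba hT0 (le_refl 1)
        rw [Nat.cast_one, div_one] at h1
        have h2 : ULDaux.sig S 1 T ≤ (N : ℝ) * a ^ T :=
          ULDaux.sig_one_le hS hX ha hb hb0 ha1 hba hT0
        have h3 : Real.log (ULDaux.sig S 1 T) ≤ Real.log N + T * Real.log a := by
          calc Real.log (ULDaux.sig S 1 T) ≤ Real.log ((N : ℝ) * a ^ T) :=
              (Real.log_le_log_iff (ULDaux.sig_pos hS hX ha hb hb0 ha1 hba _ _)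
                (mul_pos (by exact_mod_cast hN) (Real.rpow_pos_of_pos ha0 _))).2 h2
            _ = Real.log N + T * Real.log a := by
              rw [Real.log_mul (by exact_mod_cast hN.ne') (Real.rpow_pos_of_pos ha0 _).ne',
                Real.log_rpow ha0]
        have h4 : T * Real.log a = -(Real.log N + 1) := by
          rw [hT]
          field_simp
          rw [div_self (ne_of_lt hloga)]
        linarith
      have hP0 : 0 ≤ ULDaux.press S 0 := ULDaux.press_zero_nonneg hS hX ha hb hb0 ha1 hba
      have hcont : ContinuousOn (ULDaux.press S) (Set.Icc 0 T) :=
        (ULDaux.press_continuousOn hS hX ha hb hb0 ha1 hba).mono Set.Icc_subset_Ici_self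
      have h0mem : (0 : ℝ) ∈ Set.Icc (ULDaux.press S T) (ULDaux.press S 0) :=
        ⟨by linarith, hP0⟩
      obtain ⟨s0, hs0mem, hs0⟩ := intermediate_value_Icc' hT0 hcont h0mem
      have hs00 : 0 ≤ s0 := hs0mem.1
      have huniq : ∀ t : ℝ, 0 ≤ t → ULDaux.press S t = 0 → t = s0 := by
        intro t ht hPt
        by_contra hne
        rcases lt_or_gt_of_ne hne with h | h
        · have hsh := ULDaux.press_shift_le hS hX ha hb hb0 ha1 hba ht h.le
          have hneg := mul_neg_of_pos_of_neg (sub_pos.2 h) hloga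
          rw [hPt, hs0] at hsh
          linarith
        · have hsh := ULDaux.press_shift_le hS hX ha hb hb0 ha1 hba hs00 h.le
          have hneg := mul_neg_of_pos_of_neg (sub_pos.2 h) hloga
          rw [hPt, hs0] at hsh
          linarith
      refine ⟨s0, hs00, hs0, huniq, ?_⟩
      rw [Metric.tendsto_atTop]
      intro ε hε
      set δ := ε * (-Real.log a) / 2 with hδ
      have hδ0 : 0 < δ := div_pos (mul_pos hε (neg_pos.2 hloga)) two_pos
      have htend := ULDaux.press_tendsto hS hX ha hb hb0 ha1 hba hs00
      rw [hs0] at htend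
      have hev : ∀ᶠ k : ℕ in atTop, Real.log (ULDaux.sig S k s0) / k < δ :=
        htend.eventually (gt_mem_nhds hδ0)
      obtain ⟨K, hK⟩ := Filter.eventually_atTop.1 hev
      refine ⟨max K 1, fun k hk => ?_⟩
      have hk1 : 1 ≤ k := le_trans (le_max_right K 1) hk
      have hkK : K ≤ k := le_trans (le_max_left K 1) hk
      have hklt := hK k hkK
      have hk0 : (0 : ℝ) < k := by exact_mod_cast hk1
      have hsig1 : ULDaux.sig S k (sk k) = 1 := hsk k hk1
      have h3 : 1 ≤ ULDaux.sig S k s0 := by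
        have hple := ULDaux.press_le hS hX ha hb hb0 ha1 hba hs00 hk1
        rw [hs0] at hple
        have hlog : 0 ≤ Real.log (ULDaux.sig S k s0) := by
          have := (le_div_iff₀ hk0).1 hple
          linarith
        exact (Real.log_nonneg_iff (ULDaux.sig_pos hS hX ha hb hb0 ha1 hba _ _)).1 hlog
      have hlow : s0 - ε < sk k := by
        by_contra hcon
        push_neg at hcon
        have h1 : ULDaux.sig S k (s0 - ε) ≤ 1 := by
          rw [← hsig1]
          exact ULDaux.sig_anti hS hX ha hb hb0 ha1 hba hcon k
        have h2 : ULDaux.sig S k s0 ≤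
            ULDaux.sig S k (s0 - ε) * a ^ ((k : ℝ) * (s0 - (s0 - ε))) :=
          ULDaux.sig_shift_le hS hX ha hb hb0 ha1 hba (by linarith) k
        have h4 : a ^ ((k : ℝ) * (s0 - (s0 - ε))) < 1 := by
          apply Real.rpow_lt_one ha0.le ha1
          have heq : s0 - (s0 - ε) = ε := by ring
          rw [heq]
          exact mul_pos hk0 hε
        have h5 : ULDaux.sig S k (s0 - ε) * a ^ ((k : ℝ) * (s0 - (s0 - ε))) ≤
            a ^ ((k : ℝ) * (s0 - (s0 - ε))) :=
          mul_le_of_le_one_left (Real.rpow_pos_of_pos ha0 _).le h1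
        linarith
      have hupp : sk k < s0 + ε := by
        by_contra hcon
        push_neg at hcon
        have h1 : ULDaux.sig S k (sk k) ≤ ULDaux.sig S k (s0 + ε) :=
          ULDaux.sig_anti hS hX ha hb hb0 ha1 hba hcon k
        have h2 : ULDaux.sig S k (s0 + ε) ≤
            ULDaux.sig S k s0 * a ^ ((k : ℝ) * (s0 + ε - s0)) :=
          ULDaux.sig_shift_le hS hX ha hb hb0 ha1 hba (by linarith) k
        have h3' : ULDaux.sig S k s0 < Real.exp (δ * k) := by
          have hlog : Real.log (ULDaux.sig S k s0) < δ * k := by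
            rw [div_lt_iff₀ hk0] at hklt
            linarith
          calc ULDaux.sig S k s0
              = Real.exp (Real.log (ULDaux.sig S k s0)) :=
                (Real.exp_log (ULDaux.sig_pos hS hX ha hb hb0 ha1 hba _ _)).symm
            _ < Real.exp (δ * k) := Real.exp_lt_exp.2 hlog
        have h4 : a ^ ((k : ℝ) * (s0 + ε - s0)) =
            Real.exp (((k : ℝ) * ε) * Real.log a) := by
          rw [show s0 + ε - s0 = ε by ring, Real.rpow_def_of_pos ha0]
          ring_nf
        have h5 : ULDaux.sig S k s0 * a ^ ((k : ℝ) * (s0 + ε - s0)) <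
            Real.exp (δ * k) * Real.exp (((k : ℝ) * ε) * Real.log a) := by
          rw [h4]
          exact mul_lt_mul_of_pos_right h3' (Real.exp_pos _)
        have h6 : Real.exp (δ * k) * Real.exp (((k : ℝ) * ε) * Real.log a) < 1 := by
          rw [← Real.exp_add, ← Real.exp_zero]
          apply Real.exp_lt_exp.2
          have heq : δ * k + (k : ℝ) * ε * Real.log a = (k : ℝ) * (ε * Real.log a / 2) := by
            rw [hδ]
            ring
          rw [heq]
          exact mul_neg_of_pos_of_neg hk0 (by nlinarith)
        linarith
      rw [Real.dist_eq, abs_lt]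
      constructor <;> linarith
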